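/- Corollary of the distribution-dependent bound: suppose the best arm i* satisfies i* ≥ 2 and is unique (μ_{i*} > μ_i for all i ≠ i*). Let Δ_{(1)} ≥ … ≥ Δ_{(i*)} = 0 be the decreasing rearrangement of {Δ_i : 1 ≤ i ≤ i*} and C = 8·ln(K·T²). Then the pseudo-regret of ELIM with horizon T satisfies R(T) ≤ (C/Δ_{(i*−1)}² + 1)·Δ_{(1)} + 2. -/

import Mathlib

open MeasureTheory Finset

/-- Empirical mean of arm `i` after `t` rounds (rounds are 0-indexed: `X s` is the
reward vector of round `s + 1`). -/
noncomputable def empMean {K : ℕ} (X : ℕ → Fin K → ℝ) (t : ℕ) (i : Fin K) : ℝ :=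
  (∑ s ∈ Finset.range t, X s i) / t

/-- The confidence radius `ρ_t = √(ln(K T²) / (2 (t-1)))`, with `ρ_1 = ∞`. -/
noncomputable def elimRho (K T t : ℕ) : EReal :=
  if t ≤ 1 then ⊤
  else ((Real.sqrt (Real.log ((K : ℝ) * (T : ℝ) ^ 2) / (2 * ((t : ℝ) - 1)))) : ℝ)

open scoped Classical in
/-- The set `S_t` of surviving arms of the ELIM algorithm with `K` arms and horizon `T`:
`S_0 = [K]`, and `S_t` keeps exactly those arms of `S_{t-1}` whose empirical mean after
`t - 1` rounds is within `2 ρ_t` of the best empirical mean over `S_{t-1}`. -/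
noncomputable def elimS (K T : ℕ) (X : ℕ → Fin K → ℝ) : ℕ → Finset (Fin K)
  | 0 => Finset.univ
  | t + 1 =>
      (elimS K T X t).filter fun i =>
        ∀ j ∈ elimS K T X t,
          ((empMean X t j - empMean X t i : ℝ) : EReal) ≤ 2 * elimRho K T (t + 1)

/-- The arm `I_t = min S_t` played by ELIM at round `t`. -/
noncomputable def elimI (K T : ℕ) [NeZero K] (X : ℕ → Fin K → ℝ) (t : ℕ) : Fin K :=
  if h : (elimS K T X t).Nonempty then (elimS K T X t).min' h else 0

/-- Extend a reward matrix on `Fin T` rounds to all of `ℕ` (by junk values `0`). -/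
noncomputable def extendRewards {K : ℕ} (T : ℕ) (ω : Fin T → Fin K → ℝ) :
    ℕ → Fin K → ℝ :=
  fun s => if h : s < T then ω ⟨s, h⟩ else 0

section Aux
open Real Filter ProbabilityTheory
open scoped ENNReal NNReal

/-- Convexity bound: for `y ∈ [0,1]`, `exp (l*y) ≤ 1 - y + y * exp l`. -/
lemma exp_le_affine {y l : ℝ} (h0 : 0 ≤ y) (h1 : y ≤ 1) :
    Real.exp (l * y) ≤ 1 - y + y * Real.exp l := by
  have h := convexOn_exp.2 (Set.mem_univ (0:ℝ)) (Set.mem_univ l)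
    (by linarith : (0:ℝ) ≤ 1 - y) h0 (by ring)
  simp only [smul_eq_mul, mul_zero, zero_add, Real.exp_zero, mul_one] at h
  calc Real.exp (l * y) = Real.exp ((1-y) * 0 + y * l) := by ring_nf
    _ ≤ (1-y) * 1 + y * Real.exp l := by
        simpa [Real.exp_zero] using
          convexOn_exp.2 (Set.mem_univ (0:ℝ)) (Set.mem_univ l)
            (by linarith : (0:ℝ) ≤ 1 - y) h0 (by ring)
    _ = 1 - y + y * Real.exp l := by ring

/-- Hoeffding's key analytic inequality. -/
lemma hoeffding_key {p : ℝ} (hp0 : 0 ≤ p) (hp1 : p ≤ 1) (l : ℝ) :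
    1 - p + p * Real.exp l ≤ Real.exp (l * p + l ^ 2 / 8) := by
  set q : ℝ := 1 - p with hq
  have hden : ∀ x : ℝ, 0 < q + p * Real.exp x := by
    intro x
    rcases lt_or_eq_of_le hp1 with h | h
    · have : 0 < q := by simp [hq]; linarith
      have : 0 ≤ p * Real.exp x := mul_nonneg hp0 (Real.exp_pos x).le
      linarith
    · have h1 : 0 < p * Real.exp x := by
        rw [h]; positivity
      have h2 : q = 0 := by simp [hq, h]
      linarith
  -- G and its derivative
  set G : ℝ → ℝ := fun x => p * Real.exp x / (q + p * Real.exp x) with hG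
  have hdenD : ∀ x : ℝ, HasDerivAt (fun x => q + p * Real.exp x) (p * Real.exp x) x := by
    intro x
    simpa using ((Real.hasDerivAt_exp x).const_mul p).const_add q
  have hGD : ∀ x : ℝ, HasDerivAt G (p * Real.exp x * q / (q + p * Real.exp x) ^ 2) x := by
    intro x
    have h1 : HasDerivAt (fun x => p * Real.exp x) (p * Real.exp x) x :=
      (Real.hasDerivAt_exp x).const_mul p
    have hd := h1.div (hdenD x) (hden x).ne'
    exact hd.congr_deriv (by ring)
  have hG0 : G 0 = p := by
    simp [hG, hq]
  have hGd_nonneg : ∀ x : ℝ, 0 ≤ p * Real.exp x * q / (q + p * Real.exp x) ^ 2 := by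
    intro x
    have hq0 : 0 ≤ q := by simp [hq]; linarith
    positivity
  have hGd_le : ∀ x : ℝ, p * Real.exp x * q / (q + p * Real.exp x) ^ 2 ≤ 1/4 := by
    intro x
    rw [div_le_iff₀ (pow_pos (hden x) 2)]
    nlinarith [sq_nonneg (q - p * Real.exp x), (hden x)]
  have hGdiff : Differentiable ℝ G := fun x => (hGD x).differentiableAt
  -- Lipschitz-type bounds on G
  have hGub : ∀ x : ℝ, 0 ≤ x → G x ≤ p + x / 4 := by
    intro x hx
    have := image_sub_le_mul_sub_of_deriv_le hGdiff
      (fun y => by rw [(hGD y).deriv]; exact hGd_le y) hx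
    rw [hG0] at this; linarith
  have hGlb : ∀ x : ℝ, x ≤ 0 → p + x / 4 ≤ G x := by
    intro x hx
    have := image_sub_le_mul_sub_of_deriv_le hGdiff
      (fun y => by rw [(hGD y).deriv]; exact hGd_le y) hx
    rw [hG0] at this; linarith
  -- F and its derivative
  set F : ℝ → ℝ := fun x => x * p + x ^ 2 / 8 - Real.log (q + p * Real.exp x) with hF
  have hFD : ∀ x : ℝ, HasDerivAt F (p + x / 4 - G x) x := by
    intro x
    have h1 : HasDerivAt (fun x : ℝ => x * p) p x := by
      simpa using (hasDerivAt_id x).mul_const p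
    have h2 : HasDerivAt (fun x : ℝ => x ^ 2 / 8) (x / 4) x := by
      have := (hasDerivAt_pow 2 x).div_const 8
      exact this.congr_deriv (by norm_num; ring)
    have h3 : HasDerivAt (fun x => Real.log (q + p * Real.exp x)) (G x) x := by
      simpa [hG] using (hdenD x).log (hden x).ne'
    exact (h1.add h2).sub h3
  have hF0 : F 0 = 0 := by simp [hF, hq]
  have hFdiff : Differentiable ℝ F := fun x => (hFD x).differentiableAt
  have hFnonneg : ∀ x : ℝ, 0 ≤ F x := by
    intro x
    rcases le_total 0 x with hx | hx
    · have hmono : MonotoneOn F (Set.Ici (0:ℝ)) := by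
        apply monotoneOn_of_deriv_nonneg (convex_Ici 0) hFdiff.continuous.continuousOn
          hFdiff.differentiableOn
        intro y hy
        rw [interior_Ici] at hy
        rw [(hFD y).deriv]
        have := hGub y (le_of_lt hy)
        linarith
      have := hmono (Set.self_mem_Ici) (Set.mem_Ici.2 hx) hx
      rwa [hF0] at this
    · have hanti : AntitoneOn F (Set.Iic (0:ℝ)) := by
        apply antitoneOn_of_deriv_nonpos (convex_Iic 0) hFdiff.continuous.continuousOn
          hFdiff.differentiableOn
        intro y hy
        rw [interior_Iic] at hy
        rw [(hFD y).deriv]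
        have := hGlb y (le_of_lt hy)
        linarith
      have := hanti (Set.mem_Iic.2 hx) (Set.self_mem_Iic) hx
      rwa [hF0] at this
  -- conclude
  have := hFnonneg l
  have hlog : Real.log (q + p * Real.exp l) ≤ l * p + l ^ 2 / 8 := by
    simp only [hF] at this; linarith
  have := (Real.log_le_iff_le_exp (hden l)).1 hlog
  simpa [hq] using this




/-- One-variable sub-Gaussian mgf bound for `[0,1]`-valued random variables. -/
lemma mgf_single_le {α : Type*} [MeasurableSpace α] (ν : Measure α) [IsProbabilityMeasure ν]
    (Y : α → ℝ) (hm : Measurable Y) (hb : ∀ᵐ x ∂ν, Y x ∈ Set.Icc (0:ℝ) 1) (l : ℝ) :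
    ∫ x, Real.exp (l * (Y x - ∫ y, Y y ∂ν)) ∂ν ≤ Real.exp (l ^ 2 / 8) := by
  have hint : Integrable Y ν := by
    refine Integrable.mono' (integrable_const 1) hm.aestronglyMeasurable ?_
    filter_upwards [hb] with x hx
    rw [Real.norm_eq_abs, abs_le]
    exact ⟨by linarith [hx.1], hx.2⟩
  set p : ℝ := ∫ y, Y y ∂ν with hp
  have hp0 : 0 ≤ p := integral_nonneg_of_ae (by filter_upwards [hb] with x hx using hx.1)
  have hp1 : p ≤ 1 := by
    have : ∫ y, Y y ∂ν ≤ ∫ _, (1:ℝ) ∂ν :=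
      integral_mono_ae hint (integrable_const 1) (by filter_upwards [hb] with x hx using hx.2)
    simpa using this
  have key : ∫ x, Real.exp (l * (Y x - p)) ∂ν
      ≤ ∫ x, Real.exp (-(l*p)) * (1 - Y x + Y x * Real.exp l) ∂ν := by
    refine integral_mono_of_nonneg (Filter.Eventually.of_forall fun x => (Real.exp_pos _).le) ?_ ?_
    · exact (((integrable_const (1:ℝ)).sub hint).add (hint.mul_const _)).const_mul _
    · filter_upwards [hb] with x hx
      have h1 : Real.exp (l * (Y x - p)) = Real.exp (-(l*p)) * Real.exp (l * Y x) := by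
        rw [← Real.exp_add]; ring_nf
      rw [h1]
      exact mul_le_mul_of_nonneg_left (exp_le_affine hx.1 hx.2) (Real.exp_pos _).le
  have heval : ∫ x, Real.exp (-(l*p)) * (1 - Y x + Y x * Real.exp l) ∂ν
      = Real.exp (-(l*p)) * (1 - p + p * Real.exp l) := by
    rw [MeasureTheory.integral_const_mul]
    congr 1
    have i1 : Integrable (fun a => 1 - Y a) ν := (integrable_const 1).sub hint
    have i2 : Integrable (fun a => Y a * Real.exp l) ν := hint.mul_const _
    rw [integral_add i1 i2, integral_sub (integrable_const 1) hint, integral_mul_const,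
      integral_const]
    simp [hp]
  have hfin : Real.exp (-(l*p)) * (1 - p + p * Real.exp l) ≤ Real.exp (l ^ 2 / 8) := by
    calc Real.exp (-(l*p)) * (1 - p + p * Real.exp l)
        ≤ Real.exp (-(l*p)) * Real.exp (l * p + l ^ 2 / 8) :=
          mul_le_mul_of_nonneg_left (hoeffding_key hp0 hp1 l) (Real.exp_pos _).le
      _ = Real.exp (l ^ 2 / 8) := by rw [← Real.exp_add]; ring_nf
  calc ∫ x, Real.exp (l * (Y x - p)) ∂ν ≤ _ := key
    _ = _ := heval
    _ ≤ _ := hfin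



lemma card_filter_val_lt (T m : ℕ) (hm : m ≤ T) :
    (Finset.univ.filter (fun s : Fin T => (s : ℕ) < m)).card = m := by
  have h1 : (Finset.univ.filter (fun s : Fin T => (s : ℕ) < m)).card = (Finset.range m).card := by
    refine Finset.card_bij' (fun (s : Fin T) _ => (s : ℕ))
      (fun a ha => (⟨a, lt_of_lt_of_le (Finset.mem_range.1 ha) hm⟩ : Fin T)) ?_ ?_ ?_ ?_
    · intro a ha
      exact Finset.mem_range.2 (Finset.mem_filter.1 ha).2
    · intro a ha
      exact Finset.mem_filter.2 ⟨Finset.mem_univ _, Finset.mem_range.1 ha⟩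
    · intro a ha; rfl
    · intro a ha; rfl
  rw [h1, Finset.card_range]

/-- Integral of a product of coordinate functions over a finite product of probability
measures. -/
lemma integral_pi_prod {α : Type*} [MeasurableSpace α] (ν : Measure α) [IsProbabilityMeasure ν]
    (T : ℕ) (f : Fin T → α → ℝ) :
    ∫ ω : Fin T → α, ∏ s, f s (ω s) ∂(Measure.pi fun _ => ν) = ∏ s, ∫ x, f s x ∂ν := by
  letI : MeasureSpace α := { volume := ν }
  have hv : (Measure.pi fun _ : Fin T => ν) = (volume : Measure (Fin T → α)) := by
    rw [MeasureTheory.volume_pi]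
    rfl
  rw [hv]
  exact MeasureTheory.integral_fintype_prod_eq_prod f







/-- Hoeffding tail bound for a sum of `m` i.i.d. `[0,1]`-valued coordinates of a product
of `T` copies of `ν`. -/
lemma hoeffding_tail {α : Type*} [MeasurableSpace α] (ν : Measure α) [IsProbabilityMeasure ν]
    (Y : α → ℝ) (hmY : Measurable Y) (hb : ∀ᵐ x ∂ν, Y x ∈ Set.Icc (0:ℝ) 1)
    (T m : ℕ) (hm1 : 1 ≤ m) (hmT : m ≤ T) (ε : ℝ) (hε : 0 ≤ ε) :
    ((Measure.pi fun _ : Fin T => ν)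
      {ω | ε ≤ (∑ s ∈ Finset.univ.filter (fun s : Fin T => (s:ℕ) < m), Y (ω s))
            - m * ∫ y, Y y ∂ν}).toReal
      ≤ Real.exp (-2 * ε ^ 2 / m) := by
  set P : Measure (Fin T → α) := Measure.pi fun _ => ν with hP
  haveI : IsProbabilityMeasure P := by rw [hP]; infer_instance
  set p : ℝ := ∫ y, Y y ∂ν with hp
  have hintY : Integrable Y ν := by
    refine Integrable.mono' (integrable_const 1) hmY.aestronglyMeasurable ?_
    filter_upwards [hb] with x hx
    rw [Real.norm_eq_abs, abs_le]; exact ⟨by linarith [hx.1], hx.2⟩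
  have hp0 : 0 ≤ p := integral_nonneg_of_ae (by filter_upwards [hb] with x hx using hx.1)
  have hp1 : p ≤ 1 := by
    have : ∫ y, Y y ∂ν ≤ ∫ _, (1:ℝ) ∂ν :=
      integral_mono_ae hintY (integrable_const 1) (by filter_upwards [hb] with x hx using hx.2)
    simpa using this
  set A : Finset (Fin T) := Finset.univ.filter (fun s : Fin T => (s:ℕ) < m) with hA
  have hcard : A.card = m := card_filter_val_lt T m hmT
  set X : (Fin T → α) → ℝ := fun ω => (∑ s ∈ A, Y (ω s)) - m * p with hX
  have hmX : Measurable X := by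
    apply Measurable.sub _ measurable_const
    exact Finset.measurable_sum _ fun s _ => hmY.comp (measurable_pi_apply s)
  set t : ℝ := 4 * ε / m with ht
  have hm0 : (0:ℝ) < m := by exact_mod_cast hm1
  have ht0 : 0 ≤ t := by positivity
  -- a.e. coordinate bounds
  have hae : ∀ᵐ ω ∂P, ∀ s : Fin T, Y (ω s) ∈ Set.Icc (0:ℝ) 1 := by
    rw [ae_all_iff]
    intro s
    exact (MeasureTheory.Measure.tendsto_eval_ae_ae (μ := fun _ : Fin T => ν) (i := s)).eventually hb
  -- bound on X
  have hXle : ∀ᵐ ω ∂P, X ω ≤ m := by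
    filter_upwards [hae] with ω hω
    have h1 : (∑ s ∈ A, Y (ω s)) ≤ ∑ s ∈ A, (1:ℝ) :=
      Finset.sum_le_sum fun s _ => (hω s).2
    rw [Finset.sum_const, hcard, nsmul_eq_mul, mul_one] at h1
    have h2 : (m:ℝ) * p ≥ 0 := by positivity
    simp only [hX]
    linarith
  -- integrability of exp (t * X)
  have h_int : Integrable (fun ω => Real.exp (t * X ω)) P := by
    refine Integrable.mono' (integrable_const (Real.exp (t * m)))
      (Real.measurable_exp.comp (measurable_const.mul hmX)).aestronglyMeasurable ?_
    filter_upwards [hXle] with ω hω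
    rw [Real.norm_eq_abs, Real.abs_exp]
    exact Real.exp_le_exp.2 (mul_le_mul_of_nonneg_left hω ht0)
  -- mgf bound
  have hprod : ∀ ω : Fin T → α, Real.exp (t * X ω)
      = ∏ s : Fin T, (if (s:ℕ) < m then Real.exp (t * (Y (ω s) - p)) else 1) := by
    intro ω
    rw [← Finset.prod_filter]
    rw [← Real.exp_sum]
    congr 1
    simp only [hX, ← hA]
    have h3 : ∑ x ∈ A, t * (Y (ω x) - p) = (∑ x ∈ A, t * Y (ω x)) - ∑ x ∈ A, t * p := by
      rw [← Finset.sum_sub_distrib]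
      exact Finset.sum_congr rfl fun x _ => by ring
    rw [h3, Finset.sum_const, ← Finset.mul_sum, nsmul_eq_mul, hcard]
    ring
  have hmgf : ∫ ω, Real.exp (t * X ω) ∂P ≤ Real.exp (m * t ^ 2 / 8) := by
    have h1 : ∫ ω, Real.exp (t * X ω) ∂P
        = ∏ s : Fin T, ∫ x, (if (s:ℕ) < m then Real.exp (t * (Y x - p)) else 1) ∂ν := by
      rw [hP]
      rw [← integral_pi_prod ν T (fun s x => if (s:ℕ) < m then Real.exp (t * (Y x - p)) else 1)]
      congr 1
      ext ω
      exact hprod ω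
    rw [h1]
    have h2 : ∀ s : Fin T, ∫ x, (if (s:ℕ) < m then Real.exp (t * (Y x - p)) else 1) ∂ν
        = if (s:ℕ) < m then ∫ x, Real.exp (t * (Y x - p)) ∂ν else 1 := by
      intro s
      by_cases h : (s:ℕ) < m <;> simp [h]
    rw [Finset.prod_congr rfl (fun s _ => h2 s), ← Finset.prod_filter, ← hA,
      Finset.prod_const, hcard]
    have hAle : ∫ x, Real.exp (t * (Y x - p)) ∂ν ≤ Real.exp (t ^ 2 / 8) :=
      mgf_single_le ν Y hmY hb t
    have hA0 : 0 ≤ ∫ x, Real.exp (t * (Y x - p)) ∂ν :=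
      integral_nonneg fun x => (Real.exp_pos _).le
    calc (∫ x, Real.exp (t * (Y x - p)) ∂ν) ^ m ≤ (Real.exp (t ^ 2 / 8)) ^ m :=
          pow_le_pow_left₀ hA0 hAle m
      _ = Real.exp (m * (t ^ 2 / 8)) := by rw [← Real.exp_nat_mul]
      _ = Real.exp (m * t ^ 2 / 8) := by ring_nf
  -- Chernoff
  have hch := measure_ge_le_exp_mul_mgf (μ := P) (X := X) ε ht0 h_int
  have hmgf' : mgf X P t ≤ Real.exp (m * t ^ 2 / 8) := hmgf
  calc (P {ω | ε ≤ X ω}).toReal ≤ Real.exp (-t * ε) * mgf X P t := hch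
    _ ≤ Real.exp (-t * ε) * Real.exp (m * t ^ 2 / 8) :=
        mul_le_mul_of_nonneg_left hmgf' (Real.exp_pos _).le
    _ = Real.exp (-t * ε + m * t ^ 2 / 8) := (Real.exp_add _ _).symm
    _ = Real.exp (-2 * ε ^ 2 / m) := by
        congr 1
        rw [ht]
        field_simp
        ring









section Det
variable {K T : ℕ} [NeZero K] (X : ℕ → Fin K → ℝ) (μ : Fin K → ℝ) (iStar : Fin K)

/-- radius as a real number -/
noncomputable def rr (K T t : ℕ) : ℝ :=
  Real.sqrt (Real.log ((K : ℝ) * (T : ℝ) ^ 2) / (2 * ((t : ℝ) - 1)))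

lemma elimRho_eq {t : ℕ} (h2 : 2 ≤ t) : elimRho K T t = ((rr K T t : ℝ) : EReal) := by
  rw [elimRho, if_neg (by omega)]; rfl

lemma ereal_le_two_mul {a b : ℝ} (h : a ≤ 2 * b) :
    ((a : ℝ) : EReal) ≤ 2 * ((b : ℝ) : EReal) := by
  have : (2 : EReal) * (b : ℝ) = ((2 * b : ℝ) : EReal) := by norm_cast
  rw [this]
  exact_mod_cast h

lemma ereal_two_mul_le {a b : ℝ} (h : ((a : ℝ) : EReal) ≤ 2 * ((b : ℝ) : EReal)) :
    a ≤ 2 * b := by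
  have h2 : (2 : EReal) * (b : ℝ) = ((2 * b : ℝ) : EReal) := by norm_cast
  rw [h2] at h
  exact_mod_cast h

/-- On a good run, the best arm survives every round. -/
lemma elim_good_star (hmax : ∀ j, μ j ≤ μ iStar)
    (Hdev : ∀ t, 2 ≤ t → t ≤ T → ∀ i, |empMean X (t-1) i - μ i| ≤ rr K T t) :
    ∀ t, t ≤ T → iStar ∈ elimS K T X t := by
  intro t
  induction t with
  | zero => intro _; simp [elimS]
  | succ t ih =>
    intro ht
    rw [elimS, Finset.mem_filter]
    refine ⟨ih (by omega), fun j hj => ?_⟩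
    rcases Nat.eq_zero_or_pos t with h0 | h0
    · subst h0
      rw [elimRho, if_pos (by norm_num), EReal.mul_top_of_pos (by norm_num)]
      exact le_top
    · have h2 : 2 ≤ t + 1 := by omega
      rw [elimRho_eq h2]
      have hdev := Hdev (t+1) h2 ht
      simp only [Nat.add_sub_cancel] at hdev
      have hj' := abs_le.1 (hdev j)
      have hi' := abs_le.1 (hdev iStar)
      have hr : rr K T (t+1) = rr K T (t+1) := rfl
      apply ereal_le_two_mul
      have := hmax j
      linarith [hj'.1, hj'.2, hi'.1, hi'.2]

/-- On a good run, the played arm is always at most `iStar`. -/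
lemma elim_good_le (hmax : ∀ j, μ j ≤ μ iStar)
    (Hdev : ∀ t, 2 ≤ t → t ≤ T → ∀ i, |empMean X (t-1) i - μ i| ≤ rr K T t)
    {t : ℕ} (ht : t ≤ T) : elimI K T X t ≤ iStar := by
  have hmem := elim_good_star X μ iStar hmax Hdev t ht
  rw [elimI, dif_pos ⟨iStar, hmem⟩]
  exact Finset.min'_le _ _ hmem

/-- On a good run, after enough rounds only `iStar` can be played. -/
lemma elim_good_eq (hmax : ∀ j, μ j ≤ μ iStar)
    (Hdev : ∀ t, 2 ≤ t → t ≤ T → ∀ i, |empMean X (t-1) i - μ i| ≤ rr K T t)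
    (hL : 0 ≤ Real.log ((K : ℝ) * (T : ℝ) ^ 2))
    (Dlow : ℝ) (hDlow : 0 < Dlow)
    (hgap : ∀ j : Fin K, (j : ℕ) < (iStar : ℕ) → Dlow ≤ μ iStar - μ j)
    {t : ℕ} (h2 : 2 ≤ t) (ht : t ≤ T)
    (hth : 8 * Real.log ((K : ℝ) * (T : ℝ) ^ 2) / Dlow ^ 2 < (t : ℝ) - 1) :
    elimI K T X t = iStar := by
  set L := Real.log ((K : ℝ) * (T : ℝ) ^ 2) with hLdef
  have htpos : (0:ℝ) < (t:ℝ) - 1 := by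
    have : (2:ℝ) ≤ (t:ℝ) := by exact_mod_cast h2
    linarith
  have hr0 : 0 ≤ rr K T t := Real.sqrt_nonneg _
  have hrsq : (rr K T t) ^ 2 = L / (2 * ((t:ℝ) - 1)) := by
    rw [rr, Real.sq_sqrt]
    positivity
  have h4r : 4 * rr K T t < Dlow := by
    have hsq : (4 * rr K T t) ^ 2 < Dlow ^ 2 := by
      have h1 : (4 * rr K T t) ^ 2 = 8 * L / ((t:ℝ) - 1) := by
        rw [mul_pow, hrsq]; field_simp; ring
      rw [h1]
      rw [div_lt_iff₀ htpos]
      have h2' : 8 * L < ((t:ℝ) - 1) * Dlow ^ 2 := by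
        have := (div_lt_iff₀ (by positivity : (0:ℝ) < Dlow ^ 2)).1 hth
        nlinarith
      linarith
    exact lt_of_pow_lt_pow_left₀ 2 hDlow.le hsq
  -- no arm strictly below iStar survives at time t
  obtain ⟨t', rfl⟩ : ∃ t', t = t' + 1 := ⟨t - 1, by omega⟩
  have hstar_mem := elim_good_star X μ iStar hmax Hdev (t' + 1) ht
  have hstar_mem' := elim_good_star X μ iStar hmax Hdev t' (by omega)
  have hnone : ∀ j ∈ elimS K T X (t' + 1), ¬ ((j : ℕ) < (iStar : ℕ)) := by
    intro j hj hlt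
    rw [elimS, Finset.mem_filter] at hj
    have hcond := hj.2 iStar hstar_mem'
    rw [elimRho_eq (by omega : 2 ≤ t' + 1)] at hcond
    have hcond' := ereal_two_mul_le hcond
    have hdev := Hdev (t'+1) (by omega) ht
    simp only [Nat.add_sub_cancel] at hdev
    have hj' := abs_le.1 (hdev j)
    have hi' := abs_le.1 (hdev iStar)
    have hgapj := hgap j hlt
    have : μ iStar - μ j ≤ 4 * rr K T (t'+1) := by
      linarith [hj'.1, hj'.2, hi'.1, hi'.2]
    linarith
  rw [elimI, dif_pos ⟨iStar, hstar_mem⟩]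
  have hmin_mem := Finset.min'_mem (elimS K T X (t'+1)) ⟨iStar, hstar_mem⟩
  have hmin_le : (elimS K T X (t'+1)).min' ⟨iStar, hstar_mem⟩ ≤ iStar :=
    Finset.min'_le _ _ hstar_mem
  have := hnone _ hmin_mem
  have hle : ((elimS K T X (t'+1)).min' ⟨iStar, hstar_mem⟩ : ℕ) ≤ (iStar : ℕ) := hmin_le
  exact Fin.ext (by omega)

end Det











lemma sum_extend {K T m : ℕ} (hm : m ≤ T) (ω : Fin T → Fin K → ℝ) (i : Fin K) :
    ∑ s ∈ Finset.range m, extendRewards T ω s i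
      = ∑ s ∈ Finset.univ.filter (fun s : Fin T => (s : ℕ) < m), ω s i := by
  have h : ∑ s ∈ Finset.univ.filter (fun s : Fin T => (s : ℕ) < m), ω s i
      = ∑ a ∈ Finset.range m, extendRewards T ω a i := by
    refine Finset.sum_bij' (fun (s : Fin T) (_ : s ∈ _) => (s : ℕ))
      (fun (a : ℕ) (ha : a ∈ Finset.range m) =>
        (⟨a, lt_of_lt_of_le (Finset.mem_range.1 ha) hm⟩ : Fin T)) ?_ ?_ ?_ ?_ ?_
    · intro s hs
      exact Finset.mem_range.2 (Finset.mem_filter.1 hs).2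
    · intro a ha
      exact Finset.mem_filter.2 ⟨Finset.mem_univ _, Finset.mem_range.1 ha⟩
    · intro s hs; rfl
    · intro a ha; rfl
    · intro s hs
      rw [extendRewards, dif_pos s.isLt]
  exact h.symm

/-- Probability that the empirical mean of arm `i` after `t-1` rounds deviates from its
true mean by more than `rr K T t`. -/
lemma deviation_prob_le {K T : ℕ} (ν : Measure (Fin K → ℝ)) [IsProbabilityMeasure ν]
    (hsupp : ∀ᵐ x ∂ν, ∀ i, x i ∈ Set.Icc (0 : ℝ) 1)
    (μ : Fin K → ℝ) (hμ : ∀ i, μ i = ∫ x, x i ∂ν)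
    (hK : 1 ≤ K) (hT : 1 ≤ T)
    {t : ℕ} (h2 : 2 ≤ t) (ht : t ≤ T) (i : Fin K) :
    (Measure.pi fun _ : Fin T => ν)
        {ω | rr K T t < |empMean (extendRewards T ω) (t-1) i - μ i|}
      ≤ ENNReal.ofReal (2 / ((K : ℝ) * (T : ℝ) ^ 2)) := by
  set P : Measure (Fin T → Fin K → ℝ) := Measure.pi fun _ => ν with hP
  haveI : IsProbabilityMeasure P := by rw [hP]; infer_instance
  set m : ℕ := t - 1 with hm
  have hm1 : 1 ≤ m := by omega
  have hmT : m ≤ T := by omega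
  have hm0 : (0:ℝ) < m := by exact_mod_cast hm1
  have hKT0 : (0:ℝ) < (K:ℝ) * (T:ℝ)^2 := by
    have : (1:ℝ) ≤ K := by exact_mod_cast hK
    have : (1:ℝ) ≤ T := by exact_mod_cast hT
    positivity
  have hKT1 : (1:ℝ) ≤ (K:ℝ) * (T:ℝ)^2 := by
    have h1 : (1:ℝ) ≤ K := by exact_mod_cast hK
    have h2' : (1:ℝ) ≤ T := by exact_mod_cast hT
    nlinarith
  set L : ℝ := Real.log ((K:ℝ) * (T:ℝ)^2) with hL
  have hL0 : 0 ≤ L := Real.log_nonneg hKT1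
  have hr0 : 0 ≤ rr K T t := Real.sqrt_nonneg _
  have hrsq : (rr K T t) ^ 2 = L / (2 * m) := by
    rw [rr, Real.sq_sqrt]
    · congr 2
      have : (2:ℝ) ≤ (t:ℝ) := by exact_mod_cast h2
      have : ((m:ℕ):ℝ) = (t:ℝ) - 1 := by
        rw [hm]; push_cast [Nat.cast_sub (by omega : 1 ≤ t)]; ring
      rw [this]
    · have : (2:ℝ) ≤ (t:ℝ) := by exact_mod_cast h2
      have h3 : (0:ℝ) < 2 * ((t:ℝ) - 1) := by linarith
      positivity
  set ε : ℝ := m * rr K T t with hε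
  have hε0 : 0 ≤ ε := by positivity
  -- the exponential bound equals 1/(K T²)
  have hexp : Real.exp (-2 * ε ^ 2 / m) = 1 / ((K:ℝ) * (T:ℝ)^2) := by
    have h1 : -2 * ε ^ 2 / m = -L := by
      rw [hε, mul_pow, hrsq]
      field_simp
    rw [h1, Real.exp_neg, hL, Real.exp_log hKT0, one_div]
  -- the two tail sets
  have hmeasY : Measurable fun x : Fin K → ℝ => x i := measurable_pi_apply i
  have hbY : ∀ᵐ x ∂ν, x i ∈ Set.Icc (0:ℝ) 1 := by
    filter_upwards [hsupp] with x hx using hx i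
  have hmeasY' : Measurable fun x : Fin K → ℝ => 1 - x i :=
    (measurable_const.sub (measurable_pi_apply i))
  have hbY' : ∀ᵐ x ∂ν, 1 - x i ∈ Set.Icc (0:ℝ) 1 := by
    filter_upwards [hsupp] with x hx
    exact ⟨by linarith [(hx i).2], by linarith [(hx i).1]⟩
  have hintY : Integrable (fun x : Fin K → ℝ => x i) ν := by
    refine Integrable.mono' (integrable_const 1) hmeasY.aestronglyMeasurable ?_
    filter_upwards [hbY] with x hx
    rw [Real.norm_eq_abs, abs_le]; exact ⟨by linarith [hx.1], hx.2⟩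
  have hup := hoeffding_tail ν (fun x => x i) hmeasY hbY T m hm1 hmT ε hε0
  have hlo := hoeffding_tail ν (fun x => 1 - x i) hmeasY' hbY' T m hm1 hmT ε hε0
  set SUp : Set (Fin T → Fin K → ℝ) :=
    {ω | ε ≤ (∑ s ∈ Finset.univ.filter (fun s : Fin T => (s:ℕ) < m), ω s i)
          - m * ∫ y, y i ∂ν} with hSUp
  set SLo : Set (Fin T → Fin K → ℝ) :=
    {ω | ε ≤ (∑ s ∈ Finset.univ.filter (fun s : Fin T => (s:ℕ) < m), (1 - ω s i))
          - m * ∫ y, (1 - y i) ∂ν} with hSLo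
  have hupP : P SUp ≤ ENNReal.ofReal (1 / ((K:ℝ) * (T:ℝ)^2)) := by
    rw [ENNReal.le_ofReal_iff_toReal_le (measure_ne_top _ _) (by positivity)]
    calc (P SUp).toReal ≤ Real.exp (-2 * ε ^ 2 / m) := hup
      _ = _ := hexp
  have hloP : P SLo ≤ ENNReal.ofReal (1 / ((K:ℝ) * (T:ℝ)^2)) := by
    rw [ENNReal.le_ofReal_iff_toReal_le (measure_ne_top _ _) (by positivity)]
    calc (P SLo).toReal ≤ Real.exp (-2 * ε ^ 2 / m) := hlo
      _ = _ := hexp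
  -- inclusion
  have hincl : {ω : Fin T → Fin K → ℝ | rr K T t < |empMean (extendRewards T ω) (t-1) i - μ i|}
      ⊆ SUp ∪ SLo := by
    intro ω hω
    simp only [Set.mem_setOf_eq] at hω
    set S : ℝ := ∑ s ∈ Finset.univ.filter (fun s : Fin T => (s:ℕ) < m), ω s i with hS
    have hemp : empMean (extendRewards T ω) (t-1) i = S / m := by
      rw [empMean, ← hm, sum_extend hmT]
    rw [hemp] at hω
    have hcard := card_filter_val_lt T m hmT
    have hsumlo : ∑ s ∈ Finset.univ.filter (fun s : Fin T => (s:ℕ) < m), (1 - ω s i)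
        = m - S := by
      rw [Finset.sum_sub_distrib, Finset.sum_const, hcard, nsmul_eq_mul, mul_one]
    have hintlo : ∫ y : Fin K → ℝ, (1 - y i) ∂ν = 1 - μ i := by
      rw [integral_sub (integrable_const 1) hintY, integral_const]
      simp [hμ i]
    rcases lt_abs.1 hω with h | h
    · left
      rw [hSUp, Set.mem_setOf_eq, ← hS, ← hμ i]
      have : (m:ℝ) * (S / m - μ i) = S - m * μ i := by field_simp
      nlinarith [mul_lt_mul_of_pos_left h hm0]
    · right
      rw [hSLo, Set.mem_setOf_eq, hsumlo, hintlo]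
      have : (m:ℝ) * (-(S / m - μ i)) = m * μ i - S := by field_simp; ring
      nlinarith [mul_lt_mul_of_pos_left h hm0]
  calc P _ ≤ P (SUp ∪ SLo) := measure_mono hincl
    _ ≤ P SUp + P SLo := measure_union_le _ _
    _ ≤ ENNReal.ofReal (1 / ((K:ℝ) * (T:ℝ)^2)) + ENNReal.ofReal (1 / ((K:ℝ) * (T:ℝ)^2)) :=
        add_le_add hupP hloP
    _ = ENNReal.ofReal (2 / ((K:ℝ) * (T:ℝ)^2)) := by
        rw [← ENNReal.ofReal_add (by positivity) (by positivity)]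
        congr 1
        ring

end Aux

open scoped ENNReal NNReal in
/-- **Corollary of the distribution dependent regret bound.** With `D 1 ≥ … ≥ D n = 0`
(`n = iStar.val + 1` the 1-indexed position of the unique best arm, `iStar` in position
at least 2) the decreasing rearrangement of the gaps of the arms `i ≤ iStar` and
`C = 8 ln(K T²)`, the pseudo-regret of ELIM with horizon `T` is at most
`(C / (D (n-1))² + 1) · D 1 + 2`. -/
theorem elim_distribution_dependent_regret_corollary
    (K T : ℕ) [NeZero K] (hT : 1 ≤ T)
    (ν : Measure (Fin K → ℝ)) [IsProbabilityMeasure ν]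
    (hsupp : ∀ᵐ x ∂ν, ∀ i, x i ∈ Set.Icc (0 : ℝ) 1)
    (μ : Fin K → ℝ) (hμ : ∀ i, μ i = ∫ x, x i ∂ν)
    (iStar : Fin K) (hstar : ∀ i, i ≠ iStar → μ i < μ iStar)
    (hpos : 1 ≤ iStar.val)
    (n : ℕ) (hn : n = iStar.val + 1)
    (σ : Equiv.Perm ℕ) (hσ : ∀ i ∈ Finset.Icc 1 n, σ i ∈ Finset.Icc 1 n)
    (D : ℕ → ℝ)
    (hD : ∀ i, ∀ hi : i ∈ Finset.Icc 1 n,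
      D i = μ iStar - μ ⟨σ i - 1, by
        have h1 := hσ i hi
        rw [Finset.mem_Icc] at h1
        have h2 := iStar.isLt
        omega⟩)
    (hanti : ∀ i j, 1 ≤ i → i ≤ j → j ≤ n → D j ≤ D i)
    (hlast : D n = 0)
    (C : ℝ) (hC : C = 8 * Real.log ((K : ℝ) * (T : ℝ) ^ 2)) :
    (∫ ω, (∑ t ∈ Finset.Icc 1 T, (μ iStar - μ (elimI K T (extendRewards T ω) t)))
        ∂(Measure.pi fun _ : Fin T => ν))
      ≤ (C / (D (n - 1)) ^ 2 + 1) * D 1 + 2 := by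
  classical
  have hKi := iStar.isLt
  have hK2 : 2 ≤ K := by omega
  have hn2 : 2 ≤ n := by omega
  set P : Measure (Fin T → Fin K → ℝ) := Measure.pi fun _ => ν with hP
  haveI : IsProbabilityMeasure P := by rw [hP]; infer_instance
  have hT0 : (0:ℝ) < T := by exact_mod_cast hT
  have hKT1 : (1:ℝ) ≤ (K:ℝ) * (T:ℝ)^2 := by
    have h1 : (1:ℝ) ≤ K := by exact_mod_cast (by omega : 1 ≤ K)
    have h2 : (1:ℝ) ≤ T := by exact_mod_cast hT
    nlinarith
  have hL0 : 0 ≤ Real.log ((K:ℝ) * (T:ℝ)^2) := Real.log_nonneg hKT1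
  have hC0 : 0 ≤ C := by rw [hC]; linarith
  -- μ facts
  have hmax : ∀ j, μ j ≤ μ iStar := by
    intro j
    by_cases h : j = iStar
    · rw [h]
    · exact (hstar j h).le
  have hμ01 : ∀ j, 0 ≤ μ j ∧ μ j ≤ 1 := by
    intro j
    have hm : Measurable fun x : Fin K → ℝ => x j := measurable_pi_apply j
    have hb : ∀ᵐ x ∂ν, x j ∈ Set.Icc (0:ℝ) 1 := by
      filter_upwards [hsupp] with x hx using hx j
    have hint : Integrable (fun x : Fin K → ℝ => x j) ν := by
      refine Integrable.mono' (integrable_const 1) hm.aestronglyMeasurable ?_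
      filter_upwards [hb] with x hx
      rw [Real.norm_eq_abs, abs_le]; exact ⟨by linarith [hx.1], hx.2⟩
    constructor
    · rw [hμ j]
      exact integral_nonneg_of_ae (by filter_upwards [hb] with x hx using hx.1)
    · rw [hμ j]
      have : ∫ x, x j ∂ν ≤ ∫ _, (1:ℝ) ∂ν :=
        integral_mono_ae hint (integrable_const 1) (by filter_upwards [hb] with x hx using hx.2)
      simpa using this
  -- σ combinatorics
  have hσn : σ n = n := by
    have hmem : n ∈ Finset.Icc 1 n := Finset.mem_Icc.2 ⟨by omega, le_refl n⟩
    have hDn := hD n hmem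
    rw [hlast] at hDn
    have harm : (⟨σ n - 1, by have := hσ n hmem; rw [Finset.mem_Icc] at this; omega⟩ : Fin K)
        = iStar := by
      by_contra hne
      have := hstar _ hne
      linarith [hDn]
    have h1 := hσ n hmem
    rw [Finset.mem_Icc] at h1
    have h2 : σ n - 1 = iStar.val := congrArg Fin.val harm
    omega
  have hsurj : ∀ a ∈ Finset.Icc 1 n, ∃ b ∈ Finset.Icc 1 n, σ b = a := by
    intro a ha
    have himg : (Finset.Icc 1 n).image σ ⊆ Finset.Icc 1 n := by
      intro x hx
      rw [Finset.mem_image] at hx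
      obtain ⟨b, hb, rfl⟩ := hx
      exact hσ b hb
    have hcard : ((Finset.Icc 1 n).image σ).card = (Finset.Icc 1 n).card :=
      Finset.card_image_of_injective _ σ.injective
    have heq : (Finset.Icc 1 n).image σ = Finset.Icc 1 n :=
      Finset.eq_of_subset_of_card_le himg (le_of_eq hcard.symm)
    rw [← heq, Finset.mem_image] at ha
    obtain ⟨b, hb, hba⟩ := ha
    exact ⟨b, hb, hba⟩
  have harmD : ∀ j : Fin K, (j:ℕ) ≤ (iStar:ℕ) →
      ∃ b ∈ Finset.Icc 1 n, σ b = (j:ℕ) + 1 ∧ D b = μ iStar - μ j := by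
    intro j hj
    have ha : (j:ℕ) + 1 ∈ Finset.Icc 1 n := Finset.mem_Icc.2 ⟨by omega, by omega⟩
    obtain ⟨b, hb, hba⟩ := hsurj _ ha
    refine ⟨b, hb, hba, ?_⟩
    rw [hD b hb]
    congr 1
    apply congrArg
    apply Fin.ext
    simp [hba]
  have hD1 : ∀ j : Fin K, (j:ℕ) ≤ (iStar:ℕ) → μ iStar - μ j ≤ D 1 := by
    intro j hj
    obtain ⟨b, hb, _, hDb⟩ := harmD j hj
    rw [Finset.mem_Icc] at hb
    rw [← hDb]
    exact hanti 1 b le_rfl hb.1 hb.2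
  have hDlow : ∀ j : Fin K, (j:ℕ) < (iStar:ℕ) → D (n-1) ≤ μ iStar - μ j := by
    intro j hj
    obtain ⟨b, hb, hba, hDb⟩ := harmD j hj.le
    rw [Finset.mem_Icc] at hb
    have hbn : b ≠ n := by
      intro h
      rw [h, hσn] at hba
      omega
    rw [← hDb]
    exact hanti b (n-1) hb.1 (by omega) (by omega)
  have hDlowpos : 0 < D (n-1) := by
    have hmem : n - 1 ∈ Finset.Icc 1 n := Finset.mem_Icc.2 ⟨by omega, by omega⟩
    have hD' := hD (n-1) hmem
    have h1 := hσ (n-1) hmem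
    rw [Finset.mem_Icc] at h1
    have hne : σ (n-1) ≠ n := by
      intro h
      have := σ.injective (h.trans hσn.symm)
      omega
    set j : Fin K := ⟨σ (n-1) - 1, by omega⟩ with hjdef
    have hjne : j ≠ iStar := by
      intro h
      have : σ (n-1) - 1 = iStar.val := congrArg Fin.val h
      omega
    rw [hD']
    have := hstar j hjne
    linarith
  have hD1nn : 0 ≤ D 1 := by
    have := hanti 1 (n-1) le_rfl (by omega) (by omega)
    linarith
  -- the bad set
  set Bad : Set (Fin T → Fin K → ℝ) :=
    ⋃ t ∈ Finset.Icc 2 T, ⋃ i : Fin K,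
      {ω | rr K T t < |empMean (extendRewards T ω) (t-1) i - μ i|} with hBad
  have hmeasBad : MeasurableSet Bad := by
    apply Set.Finite.measurableSet_biUnion (Finset.Icc 2 T).finite_toSet
    intro t _
    apply MeasurableSet.iUnion
    intro i
    have hmeas : Measurable fun ω : Fin T → Fin K → ℝ =>
        |empMean (extendRewards T ω) (t-1) i - μ i| := by
      apply Measurable.abs
      apply Measurable.sub _ measurable_const
      unfold empMean
      apply Measurable.div _ measurable_const
      apply Finset.measurable_sum
      intro s _
      unfold extendRewards
      by_cases h : s < T
      · simp only [dif_pos h]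
        exact (measurable_pi_apply i).comp (measurable_pi_apply _)
      · simp only [dif_neg h]
        exact measurable_const
    exact measurableSet_lt measurable_const hmeas
  -- probability of Bad
  have hPBad : (P Bad).toReal ≤ 2 / T := by
    have h1 : P Bad ≤ ∑ t ∈ Finset.Icc 2 T, ∑ i : Fin K,
        ENNReal.ofReal (2 / ((K:ℝ) * (T:ℝ)^2)) := by
      refine le_trans (measure_biUnion_finset_le _ _) ?_
      refine Finset.sum_le_sum fun t ht => ?_
      refine le_trans (measure_iUnion_le _) ?_
      rw [tsum_fintype]
      refine Finset.sum_le_sum fun i _ => ?_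
      rw [Finset.mem_Icc] at ht
      exact deviation_prob_le ν hsupp μ hμ (by omega) hT ht.1 ht.2 i
    have h2 : (∑ t ∈ Finset.Icc 2 T, ∑ i : Fin K,
        ENNReal.ofReal (2 / ((K:ℝ) * (T:ℝ)^2))) ≤ ENNReal.ofReal (2 / T) := by
      rw [Finset.sum_const, Finset.sum_const, Finset.card_univ, Fintype.card_fin,
        Nat.card_Icc]
      rw [nsmul_eq_mul, nsmul_eq_mul, ← mul_assoc]
      have hcast : ((T + 1 - 2 : ℕ) : ℝ≥0∞) * (K : ℝ≥0∞)
          = ENNReal.ofReal (((T + 1 - 2 : ℕ) : ℝ) * (K : ℝ)) := by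
        rw [ENNReal.ofReal_mul (by positivity), ENNReal.ofReal_natCast,
          ENNReal.ofReal_natCast]
      rw [hcast, ← ENNReal.ofReal_mul (by positivity)]
      apply ENNReal.ofReal_le_ofReal
      have hTK : ((T + 1 - 2 : ℕ) : ℝ) ≤ (T : ℝ) := by
        have : T + 1 - 2 ≤ T := by omega
        exact_mod_cast this
      have hK0 : (0:ℝ) < K := by exact_mod_cast (by omega : 0 < K)
      have hfe : ((T + 1 - 2 : ℕ) : ℝ) * (K:ℝ) * (2 / ((K:ℝ) * (T:ℝ)^2))
          = ((T + 1 - 2 : ℕ) : ℝ) * 2 / (T:ℝ)^2 := by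
        field_simp
      rw [hfe, div_le_div_iff₀ (by positivity) hT0]
      nlinarith [hTK, hT0]
    have h3 := le_trans h1 h2
    calc (P Bad).toReal ≤ (ENNReal.ofReal (2 / (T:ℝ))).toReal :=
          ENNReal.toReal_mono (by simp) h3
      _ = 2 / T := ENNReal.toReal_ofReal (by positivity)
  -- pointwise bound and conclusion
  set Cd : ℝ := C / (D (n-1))^2 with hCd
  have hCd0 : 0 ≤ Cd := div_nonneg hC0 (sq_nonneg _)
  set B : ℝ := (Cd + 1) * D 1 with hB
  have hB0 : 0 ≤ B := mul_nonneg (by linarith) hD1nn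
  set g : (Fin T → Fin K → ℝ) → ℝ :=
    fun ω => B + Set.indicator Bad (fun _ => (T:ℝ)) ω with hg
  have hint_g : Integrable g P :=
    (integrable_const B).add ((integrable_const (T:ℝ)).indicator hmeasBad)
  have hfg : ∀ ω, (∑ t ∈ Finset.Icc 1 T, (μ iStar - μ (elimI K T (extendRewards T ω) t)))
      ≤ g ω := by
    intro ω
    by_cases hω : ω ∈ Bad
    · rw [hg]
      simp only [Set.indicator_of_mem hω]
      have h1 : (∑ t ∈ Finset.Icc 1 T, (μ iStar - μ (elimI K T (extendRewards T ω) t)))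
          ≤ ∑ t ∈ Finset.Icc 1 T, (1:ℝ) := by
        refine Finset.sum_le_sum fun t _ => ?_
        have := (hμ01 (elimI K T (extendRewards T ω) t)).1
        have := (hμ01 iStar).2
        linarith
      rw [Finset.sum_const, Nat.card_Icc, nsmul_eq_mul, mul_one] at h1
      have h2 : ((T + 1 - 1 : ℕ):ℝ) = (T:ℝ) := by norm_cast
      rw [h2] at h1
      linarith
    · have hGood : ∀ t, 2 ≤ t → t ≤ T →
          ∀ i, |empMean (extendRewards T ω) (t-1) i - μ i| ≤ rr K T t := by
        intro t h2 ht i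
        by_contra hcon
        push_neg at hcon
        apply hω
        rw [hBad]
        refine Set.mem_biUnion (by exact_mod_cast Finset.mem_Icc.2 ⟨h2, ht⟩) ?_
        exact Set.mem_iUnion.2 ⟨i, hcon⟩
      rw [hg]
      simp only [Set.indicator_of_notMem hω, add_zero]
      have hstep : ∀ t ∈ Finset.Icc 1 T,
          μ iStar - μ (elimI K T (extendRewards T ω) t)
            ≤ if ((t:ℝ) - 1 ≤ Cd) then D 1 else 0 := by
        intro t htm
        rw [Finset.mem_Icc] at htm
        by_cases hc : (t:ℝ) - 1 ≤ Cd
        · rw [if_pos hc]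
          have hle := elim_good_le (extendRewards T ω) μ iStar hmax hGood htm.2
          exact hD1 _ hle
        · rw [if_neg hc]
          push_neg at hc
          have ht1 : (1:ℝ) < (t:ℝ) := by linarith
          have h2t : 2 ≤ t := by
            have h1t : 1 < t := by exact_mod_cast ht1
            omega
          have hth : 8 * Real.log ((K : ℝ) * (T : ℝ) ^ 2) / (D (n-1)) ^ 2 < (t : ℝ) - 1 := by
            rw [hCd, hC] at hc
            exact hc
          have heq := elim_good_eq (extendRewards T ω) μ iStar hmax hGood hL0
            (D (n-1)) hDlowpos hDlow h2t htm.2 hth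
          rw [heq]
          simp
      calc (∑ t ∈ Finset.Icc 1 T, (μ iStar - μ (elimI K T (extendRewards T ω) t)))
          ≤ ∑ t ∈ Finset.Icc 1 T, (if ((t:ℝ) - 1 ≤ Cd) then D 1 else 0) :=
            Finset.sum_le_sum hstep
        _ ≤ B := by
            rw [← Finset.sum_filter, Finset.sum_const, nsmul_eq_mul]
            set M := Nat.floor (Cd + 1) with hM
            have hsub : (Finset.Icc 1 T).filter (fun t : ℕ => (t:ℝ) - 1 ≤ Cd)
                ⊆ Finset.Icc 1 M := by
              intro t htm
              rw [Finset.mem_filter, Finset.mem_Icc] at htm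
              rw [Finset.mem_Icc]
              exact ⟨htm.1.1, Nat.le_floor (by linarith [htm.2])⟩
            have hcard : ((Finset.Icc 1 T).filter (fun t : ℕ => (t:ℝ) - 1 ≤ Cd)).card ≤ M := by
              refine le_trans (Finset.card_le_card hsub) ?_
              rw [Nat.card_Icc]
              omega
            have hMle : (M:ℝ) ≤ Cd + 1 := Nat.floor_le (by linarith)
            have hcard' : (((Finset.Icc 1 T).filter (fun t : ℕ => (t:ℝ) - 1 ≤ Cd)).card : ℝ)
                ≤ Cd + 1 := le_trans (by exact_mod_cast hcard) hMle
            rw [hB]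
            exact mul_le_mul_of_nonneg_right hcard' hD1nn
  have hf0 : ∀ ω, 0 ≤ ∑ t ∈ Finset.Icc 1 T, (μ iStar - μ (elimI K T (extendRewards T ω) t)) :=
    fun ω => Finset.sum_nonneg fun t _ => by linarith [hmax (elimI K T (extendRewards T ω) t)]
  have hint : (∫ ω, (∑ t ∈ Finset.Icc 1 T, (μ iStar - μ (elimI K T (extendRewards T ω) t))) ∂P)
      ≤ ∫ ω, g ω ∂P :=
    integral_mono_of_nonneg (Filter.Eventually.of_forall hf0) hint_g
      (Filter.Eventually.of_forall hfg)
  have hgval : ∫ ω, g ω ∂P = B + (P Bad).toReal * (T:ℝ) := by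
    rw [hg]
    rw [integral_add (integrable_const B) ((integrable_const (T:ℝ)).indicator hmeasBad)]
    rw [integral_const, integral_indicator_const _ hmeasBad]
    simp [smul_eq_mul, Measure.real]
  have hfinal : B + (P Bad).toReal * (T:ℝ) ≤ B + 2 := by
    have h1 : (P Bad).toReal * (T:ℝ) ≤ (2 / T) * T :=
      mul_le_mul_of_nonneg_right hPBad hT0.le
    have h2 : (2 / (T:ℝ)) * T = 2 := by field_simp
    linarith
  calc (∫ ω, (∑ t ∈ Finset.Icc 1 T, (μ iStar - μ (elimI K T (extendRewards T ω) t))) ∂P)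
      ≤ ∫ ω, g ω ∂P := hint
    _ = B + (P Bad).toReal * (T:ℝ) := hgval
    _ ≤ B + 2 := hfinal
    _ = (C / (D (n-1)) ^ 2 + 1) * D 1 + 2 := by rw [hB, hCd]
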